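/- arXiv:1810.12861 — 4 statements merged into one kernel-verified Lean document; each statement's English description precedes it below -/
import Mathlib

section
/- Let (N, 𝓜) be a matroid of rank K and let A and B be bases. Given any enumeration (a_1, …, a_K) of A, there exists an enumeration (b_1, …, b_K) of B such that for every i ∈ {1, …, K}, A^{i−1} ∪ {b_i} ∈ 𝓜, and moreover whenever b_i ∈ A ∩ B one has b_i = a_i. -/
open Finset

/-- The set `{a 1, …, a i}` of the first `i` elements of the sequence `a`. -/
def initSeg {α : Type*} [DecidableEq α] (a : ℕ → α) (i : ℕ) : Finset α :=
  (Finset.Icc 1 i).image a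

/-- Exchange ordering of bases: given an enumeration of a basis `A`, any
basis `B` can be enumerated so that `A^{i−1} ∪ {b_i} ∈ 𝓜` for every `i`, and `b_i ∈ A ∩ B`
implies `b_i = a_i`. -/
theorem basis_exchange_ordering {α : Type*} [DecidableEq α]
    (N : Finset α) (M : Finset α → Prop)
    (hM_ground : ∀ S, M S → S ⊆ N) (hM_empty : M ∅)
    (hM_down : ∀ S T : Finset α, M T → S ⊆ T → M S)
    (hM_aug : ∀ S T : Finset α, M S → M T → S.card < T.card → ∃ x ∈ T \ S, M (insert x S))
    (K : ℕ) (hK_le : ∀ S, M S → S.card ≤ K) (hK_ex : ∃ B, M B ∧ B.card = K)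
    (A B : Finset α) (hA_M : M A) (hA_card : A.card = K)
    (hB_M : M B) (hB_card : B.card = K)
    (a : ℕ → α) (ha_inj : Set.InjOn a (Set.Icc 1 K))
    (ha_img : (Finset.Icc 1 K).image a = A) :
    ∃ b : ℕ → α, Set.InjOn b (Set.Icc 1 K) ∧ (Finset.Icc 1 K).image b = B ∧
      ∀ i ∈ Finset.Icc 1 K,
        M (insert (b i) (initSeg a (i - 1))) ∧ (b i ∈ A ∩ B → b i = a i) := by
  classical
  -- augment any independent set to a basis using elements of B
  have haug : ∀ n (S : Finset α), M S → K ≤ S.card + n →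
      ∃ C, M C ∧ S ⊆ C ∧ C ⊆ S ∪ B ∧ C.card = K := by
    intro n
    induction n with
    | zero =>
      intro S hS hle
      exact ⟨S, hS, Finset.Subset.refl _, Finset.subset_union_left,
        le_antisymm (hK_le S hS) (by omega)⟩
    | succ n ih =>
      intro S hS hle
      by_cases h : K ≤ S.card
      · exact ⟨S, hS, Finset.Subset.refl _, Finset.subset_union_left,
          le_antisymm (hK_le S hS) h⟩
      · obtain ⟨x, hx, hxM⟩ := hM_aug S B hS hB_M (by omega)
        have hxB := (Finset.mem_sdiff.mp hx).1
        have hxS := (Finset.mem_sdiff.mp hx).2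
        obtain ⟨C, hC, hSC, hCB, hCK⟩ := ih (insert x S) hxM (by
          rw [Finset.card_insert_of_notMem hxS]; omega)
        refine ⟨C, hC, (Finset.subset_insert _ _).trans hSC, ?_, hCK⟩
        intro y hy
        rcases Finset.mem_union.mp (hCB hy) with h1 | h1
        · rcases Finset.mem_insert.mp h1 with rfl | h2
          · exact Finset.mem_union_right _ hxB
          · exact Finset.mem_union_left _ h2
        · exact Finset.mem_union_right _ h1
  -- basic facts about initSeg
  have hinit_sub : ∀ i, i ≤ K → initSeg a i ⊆ A := by
    intro i hi
    rw [← ha_img]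
    exact Finset.image_subset_image (Finset.Icc_subset_Icc_right hi)
  have hinit_card : ∀ i, i ≤ K → (initSeg a i).card = i := by
    intro i hi
    rw [initSeg, Finset.card_image_of_injOn, Nat.card_Icc]
    · omega
    · intro x hx y hy hxy
      have hx' := Finset.mem_Icc.mp hx
      have hy' := Finset.mem_Icc.mp hy
      exact ha_inj (Set.mem_Icc.mpr ⟨hx'.1, hx'.2.trans hi⟩)
        (Set.mem_Icc.mpr ⟨hy'.1, hy'.2.trans hi⟩) hxy
  have hinit_M : ∀ i, i ≤ K → M (initSeg a i) := fun i hi =>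
    hM_down _ _ hA_M (hinit_sub i hi)
  have hinit_succ : ∀ i, 1 ≤ i → insert (a i) (initSeg a (i - 1)) = initSeg a i := by
    intro i hi
    rw [initSeg, initSeg, ← Finset.image_insert]
    congr 1
    ext j
    simp only [Finset.mem_insert, Finset.mem_Icc]
    omega
  -- the set of candidates for position i
  set V : ℕ → Finset α := fun i =>
    (B \ A).filter (fun x => M (insert x (initSeg a (i - 1)))) with hV
  -- counting lemma
  have key : ∀ i, 1 ≤ i → i ≤ K →
      ((Finset.Icc i K).filter (fun j => a j ∉ B)).card ≤ (V i).card := by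
    intro i hi1 hiK
    set S := initSeg a (i - 1) with hSdef
    have hScard : S.card = i - 1 := hinit_card (i - 1) (by omega)
    have hSM : M S := hinit_M (i - 1) (by omega)
    obtain ⟨C, hC, hSC, hCSB, hCK⟩ := haug K S hSM (by omega)
    set D := C \ S with hD
    have hDcard : D.card = K - (i - 1) := by
      rw [hD, Finset.card_sdiff_of_subset hSC, hCK, hScard]
    have hDB : ∀ x ∈ D, x ∈ B := by
      intro x hx
      have hx' := Finset.mem_sdiff.mp hx
      rcases Finset.mem_union.mp (hCSB hx'.1) with h | h
      · exact absurd h hx'.2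
      · exact h
    -- elements of D not in A are candidates
    have h1 : D.filter (fun x => x ∉ A) ⊆ V i := by
      intro x hx
      have hx1 := Finset.mem_filter.mp hx
      have hx2 := Finset.mem_sdiff.mp hx1.1
      refine Finset.mem_filter.mpr ⟨Finset.mem_sdiff.mpr ⟨hDB x hx1.1, hx1.2⟩, ?_⟩
      exact hM_down _ _ hC (Finset.insert_subset hx2.1 hSC)
    -- elements of D in A come from indices in Icc i K with a j ∈ B
    have h2 : D.filter (fun x => x ∈ A) ⊆
        ((Finset.Icc i K).filter (fun j => a j ∈ B)).image a := by
      intro x hx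
      have hx1 := Finset.mem_filter.mp hx
      have hx2 := Finset.mem_sdiff.mp hx1.1
      rw [← ha_img] at hx1
      obtain ⟨j, hj, hja⟩ := Finset.mem_image.mp hx1.2
      have hj' := Finset.mem_Icc.mp hj
      have hji : ¬ j ≤ i - 1 := by
        intro hle
        exact hx2.2 (Finset.mem_image.mpr ⟨j, Finset.mem_Icc.mpr ⟨hj'.1, hle⟩, hja⟩)
      refine Finset.mem_image.mpr ⟨j, Finset.mem_filter.mpr ⟨Finset.mem_Icc.mpr ⟨by omega, hj'.2⟩, ?_⟩, hja⟩
      rw [hja]; exact hDB x hx1.1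
    have hc1 : (D.filter (fun x => x ∉ A)).card ≤ (V i).card := Finset.card_le_card h1
    have hc2 : (D.filter (fun x => x ∈ A)).card ≤
        ((Finset.Icc i K).filter (fun j => a j ∈ B)).card :=
      le_trans (Finset.card_le_card h2) Finset.card_image_le
    have hsplit : (D.filter (fun x => x ∈ A)).card + (D.filter (fun x => x ∉ A)).card = D.card :=
      Finset.card_filter_add_card_filter_not _
    have hsplit2 : ((Finset.Icc i K).filter (fun j => a j ∈ B)).card +
        ((Finset.Icc i K).filter (fun j => a j ∉ B)).card = (Finset.Icc i K).card :=
      Finset.card_filter_add_card_filter_not _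
    have hicc : (Finset.Icc i K).card = K + 1 - i := Nat.card_Icc i K
    omega
  -- Hall's theorem
  set I : Finset ℕ := (Finset.Icc 1 K).filter (fun j => a j ∉ B) with hI
  set t : {x // x ∈ I} → Finset α := fun i => V i.1 with ht
  have hall : ∀ s : Finset {x // x ∈ I}, s.card ≤ (s.biUnion t).card := by
    intro s
    rcases s.eq_empty_or_nonempty with rfl | hs
    · simp
    obtain ⟨i0, hi0s, hmin⟩ := s.exists_min_image (fun i => (i : ℕ)) hs
    have hi0 := Finset.mem_filter.mp i0.2
    have hi0' := Finset.mem_Icc.mp hi0.1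
    have hstep1 : s.card ≤ ((Finset.Icc (i0 : ℕ) K).filter (fun j => a j ∉ B)).card := by
      have : s.image Subtype.val ⊆ (Finset.Icc (i0 : ℕ) K).filter (fun j => a j ∉ B) := by
        intro j hj
        obtain ⟨jι, hjι, rfl⟩ := Finset.mem_image.mp hj
        have hj2 := Finset.mem_filter.mp jι.2
        have hj3 := Finset.mem_Icc.mp hj2.1
        exact Finset.mem_filter.mpr ⟨Finset.mem_Icc.mpr ⟨hmin jι hjι, hj3.2⟩, hj2.2⟩
      calc s.card = (s.image Subtype.val).card :=
            (Finset.card_image_of_injective s Subtype.val_injective).symm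
        _ ≤ _ := Finset.card_le_card this
    have hstep2 : ((Finset.Icc (i0 : ℕ) K).filter (fun j => a j ∉ B)).card ≤ (t i0).card :=
      key i0 hi0'.1 hi0'.2
    have hstep3 : (t i0).card ≤ (s.biUnion t).card :=
      Finset.card_le_card (Finset.subset_biUnion_of_mem t hi0s)
    omega
  obtain ⟨f, hf_inj, hf_mem⟩ := (Finset.all_card_le_biUnion_card_iff_exists_injective t).mp hall
  -- define b
  set b : ℕ → α := fun i => if h : i ∈ I then f ⟨i, h⟩ else a i with hb
  have hbinj : Set.InjOn b (Set.Icc 1 K) := by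
    intro i hi j hj hij
    have hi' : i ∈ Finset.Icc 1 K := Finset.mem_Icc.mpr (Set.mem_Icc.mp hi)
    have hj' : j ∈ Finset.Icc 1 K := Finset.mem_Icc.mpr (Set.mem_Icc.mp hj)
    simp only [hb] at hij
    by_cases h1 : i ∈ I <;> by_cases h2 : j ∈ I
    · rw [dif_pos h1, dif_pos h2] at hij
      exact congrArg Subtype.val (hf_inj hij)
    · rw [dif_pos h1, dif_neg h2] at hij
      exfalso
      have := hf_mem ⟨i, h1⟩
      have hBA := (Finset.mem_sdiff.mp (Finset.mem_filter.mp this).1).2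
      apply hBA
      rw [hij, ← ha_img]
      exact Finset.mem_image_of_mem a hj'
    · rw [dif_neg h1, dif_pos h2] at hij
      exfalso
      have := hf_mem ⟨j, h2⟩
      have hBA := (Finset.mem_sdiff.mp (Finset.mem_filter.mp this).1).2
      apply hBA
      rw [← hij, ← ha_img]
      exact Finset.mem_image_of_mem a hi'
    · rw [dif_neg h1, dif_neg h2] at hij
      exact ha_inj hi hj hij
  refine ⟨b, hbinj, ?_, ?_⟩
  · -- image is B
    have hsub : (Finset.Icc 1 K).image b ⊆ B := by
      intro x hx
      obtain ⟨i, hi, rfl⟩ := Finset.mem_image.mp hx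
      by_cases h : i ∈ I
      · simp only [hb, h, dif_pos]
        exact (Finset.mem_sdiff.mp (Finset.mem_filter.mp (hf_mem ⟨i, h⟩)).1).1
      · simp only [hb, h, dif_neg, not_false_iff]
        have : ¬ a i ∉ B := fun hn => h (Finset.mem_filter.mpr ⟨hi, hn⟩)
        exact not_not.mp this
    have hcard : ((Finset.Icc 1 K).image b).card = K := by
      rw [Finset.card_image_of_injOn (by rw [Finset.coe_Icc]; exact hbinj), Nat.card_Icc]
      omega
    exact Finset.eq_of_subset_of_card_le hsub (by omega)
  · intro i hi
    have hi' := Finset.mem_Icc.mp hi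
    by_cases h : i ∈ I
    · constructor
      · simp only [hb, h, dif_pos]
        exact (Finset.mem_filter.mp (hf_mem ⟨i, h⟩)).2
      · intro hmem
        exfalso
        simp only [hb, h, dif_pos] at hmem
        exact (Finset.mem_sdiff.mp (Finset.mem_filter.mp (hf_mem ⟨i, h⟩)).1).2
          (Finset.mem_inter.mp hmem).1
    · have hbi : b i = a i := by rw [hb]; exact dif_neg h
      rw [hbi]
      exact ⟨by rw [hinit_succ i hi'.1]; exact hinit_M i hi'.2, fun _ => rfl⟩
end

section
/- Let (N, 𝓜) be a matroid of rank K, let A be a basis with enumeration (a_1, …, a_K), and let i ∈ {1, …, K}. If there exists exactly one element a ∈ N ∖ A^{i−1} with A^{i−1} ∪ {a} ∈ 𝓜, then a belongs to every basis of the matroid. -/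
open Finset

/-- If at step `i` there is exactly one element `x ∈ N ∖ A^{i−1}` with
`A^{i−1} ∪ {x} ∈ 𝓜`, then `x` belongs to every basis. -/
theorem unique_extension_mem_every_basis {α : Type*} [DecidableEq α]
    (N : Finset α) (M : Finset α → Prop)
    (hM_ground : ∀ S, M S → S ⊆ N) (hM_empty : M ∅)
    (hM_down : ∀ S T : Finset α, M T → S ⊆ T → M S)
    (hM_aug : ∀ S T : Finset α, M S → M T → S.card < T.card → ∃ x ∈ T \ S, M (insert x S))
    (K : ℕ) (hK_le : ∀ S, M S → S.card ≤ K) (hK_ex : ∃ B, M B ∧ B.card = K)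
    (A : Finset α) (hA_M : M A) (hA_card : A.card = K)
    (a : ℕ → α) (ha_inj : Set.InjOn a (Set.Icc 1 K))
    (ha_img : (Finset.Icc 1 K).image a = A)
    (i : ℕ) (hi : i ∈ Finset.Icc 1 K)
    (x : α) (hx_N : x ∈ N) (hx_not : x ∉ initSeg a (i - 1))
    (hx_M : M (insert x (initSeg a (i - 1))))
    (huniq : ∀ y ∈ N, y ∉ initSeg a (i - 1) → M (insert y (initSeg a (i - 1))) → y = x) :
    ∀ B : Finset α, M B → B.card = K → x ∈ B := by
  intro B hB hBcard
  obtain ⟨hi1, hiK⟩ := Finset.mem_Icc.mp hi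
  have hS_sub : initSeg a (i - 1) ⊆ A := by
    rw [← ha_img]
    exact Finset.image_subset_image (Finset.Icc_subset_Icc_right (by omega))
  have hS_M : M (initSeg a (i - 1)) := hM_down _ _ hA_M hS_sub
  have hS_card : (initSeg a (i - 1)).card < B.card := by
    calc (initSeg a (i - 1)).card ≤ (Finset.Icc 1 (i - 1)).card :=
          Finset.card_image_le
      _ = i - 1 := by rw [Nat.card_Icc]; omega
      _ < B.card := by omega
  obtain ⟨y, hy, hyM⟩ := hM_aug _ _ hS_M hB hS_card
  rw [Finset.mem_sdiff] at hy
  have := huniq y (hM_ground _ hB hy.1) hy.2 hyM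
  exact this ▸ hy.1
end

section
/- Let (N, 𝓜) be a matroid of rank K, let A be a basis with enumeration (a_1, …, a_K), and let i ∈ {1, …, K}. If S ⊆ N ∖ A^{i−1} is the unique set with |S| = K − i + 1 and A^{i−1} ∪ S ∈ 𝓜 (necessarily S = A ∖ A^{i−1}), then S is contained in every basis of the matroid. -/
open Finset

/-- If `S` is the unique subset of `N ∖ A^{i−1}` of cardinality
`K − i + 1` with `A^{i−1} ∪ S ∈ 𝓜`, then `S` is contained in every basis. -/
theorem unique_completion_subset_every_basis {α : Type*} [DecidableEq α]
    (N : Finset α) (M : Finset α → Prop)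
    (hM_ground : ∀ S, M S → S ⊆ N) (hM_empty : M ∅)
    (hM_down : ∀ S T : Finset α, M T → S ⊆ T → M S)
    (hM_aug : ∀ S T : Finset α, M S → M T → S.card < T.card → ∃ x ∈ T \ S, M (insert x S))
    (K : ℕ) (hK_le : ∀ S, M S → S.card ≤ K) (hK_ex : ∃ B, M B ∧ B.card = K)
    (A : Finset α) (hA_M : M A) (hA_card : A.card = K)
    (a : ℕ → α) (ha_inj : Set.InjOn a (Set.Icc 1 K))
    (ha_img : (Finset.Icc 1 K).image a = A)
    (i : ℕ) (hi : i ∈ Finset.Icc 1 K)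
    (S : Finset α) (hS_sub : S ⊆ N \ initSeg a (i - 1))
    (hS_card : S.card = K - i + 1) (hS_M : M (initSeg a (i - 1) ∪ S))
    (huniq : ∀ S' : Finset α, S' ⊆ N \ initSeg a (i - 1) → S'.card = K - i + 1 →
      M (initSeg a (i - 1) ∪ S') → S' = S) :
    ∀ B : Finset α, M B → B.card = K → S ⊆ B := by
  intro B hB hBcard x hxS
  by_contra hxB
  obtain ⟨hi1, hiK⟩ := Finset.mem_Icc.mp hi
  have hinit_card : (initSeg a (i-1)).card = i - 1 := by
    rw [initSeg, Finset.card_image_of_injOn, Nat.card_Icc]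
    · omega
    · apply ha_inj.mono
      intro t ht
      simp only [Finset.coe_Icc, Set.mem_Icc] at *
      omega
  have hdisj : Disjoint (initSeg a (i-1)) S := by
    rw [Finset.disjoint_right]
    intro t ht
    exact (Finset.mem_sdiff.mp (hS_sub ht)).2
  set T := initSeg a (i-1) ∪ S.erase x with hT
  have hTM : M T := hM_down _ _ hS_M
    (Finset.union_subset_union_right (Finset.erase_subset x S))
  have hTcard : T.card = K - 1 := by
    rw [hT, Finset.card_union_of_disjoint
      (hdisj.mono_right (Finset.erase_subset x S)), hinit_card,
      Finset.card_erase_of_mem hxS, hS_card]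
    omega
  obtain ⟨y, hyBT, hyM⟩ := hM_aug T B hTM hB (by omega)
  obtain ⟨hyB, hyT⟩ := Finset.mem_sdiff.mp hyBT
  have hyinit : y ∉ initSeg a (i-1) := fun h => hyT (Finset.mem_union_left _ h)
  have hS' : insert y (S.erase x) = S := by
    apply huniq
    · apply Finset.insert_subset
      · exact Finset.mem_sdiff.mpr ⟨hM_ground B hB hyB, hyinit⟩
      · exact (Finset.erase_subset x S).trans hS_sub
    · rw [Finset.card_insert_of_notMem (fun h => hyT (Finset.mem_union_right _ h)),
        Finset.card_erase_of_mem hxS, hS_card]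
      omega
    · rw [Finset.union_insert, ← hT]; exact hyM
  have hxS' : x ∈ insert y (S.erase x) := by rw [hS']; exact hxS
  rcases Finset.mem_insert.mp hxS' with h | h
  · exact hxB (h ▸ hyB)
  · exact (Finset.notMem_erase x S) h
end

section
/- Let (N, 𝓜) be a matroid of rank K, let A be a basis with enumeration (a_1, …, a_K), and let i ∈ {1, …, K}. Then there exists a unique set S ⊆ N ∖ A^{i−1} with |S| = K − i + 1 and A^{i−1} ∪ S ∈ 𝓜 if and only if there exist exactly K − i + 1 elements x ∈ N ∖ A^{i−1} with A^{i−1} ∪ {x} ∈ 𝓜. -/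
open Finset

private lemma extend_aux {α : Type*} [DecidableEq α] (M : Finset α → Prop)
    (hM_aug : ∀ S T : Finset α, M S → M T → S.card < T.card → ∃ x ∈ T \ S, M (insert x S))
    (K : ℕ) (hK_le : ∀ S, M S → S.card ≤ K) (B : Finset α) (hB : M B) (hBcard : B.card = K) :
    ∀ n (S : Finset α), M S → K - S.card ≤ n → ∃ T, S ⊆ T ∧ M T ∧ T.card = K := by
  intro n
  induction n with
  | zero =>
    intro S hS hle
    exact ⟨S, subset_rfl, hS, le_antisymm (hK_le S hS) (by omega)⟩
  | succ n ih =>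
    intro S hS hle
    by_cases hcard : S.card = K
    · exact ⟨S, subset_rfl, hS, hcard⟩
    · have hlt : S.card < K := lt_of_le_of_ne (hK_le S hS) hcard
      obtain ⟨x, hx, hxM⟩ := hM_aug S B hS hB (by omega)
      have hxS : x ∉ S := (Finset.mem_sdiff.mp hx).2
      have hcard' : (insert x S).card = S.card + 1 := Finset.card_insert_of_notMem hxS
      obtain ⟨T, hT1, hT2, hT3⟩ := ih (insert x S) hxM (by omega)
      exact ⟨T, (Finset.subset_insert x S).trans hT1, hT2, hT3⟩

/-- There is a unique `S ⊆ N ∖ A^{i−1}` with `|S| = K − i + 1` and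
`A^{i−1} ∪ S ∈ 𝓜` iff there are exactly `K − i + 1` elements `x ∈ N ∖ A^{i−1}` with
`A^{i−1} ∪ {x} ∈ 𝓜`. -/
theorem unique_completion_iff_count_extensions {α : Type*} [DecidableEq α]
    (N : Finset α) (M : Finset α → Prop)
    (hM_ground : ∀ S, M S → S ⊆ N) (hM_empty : M ∅)
    (hM_down : ∀ S T : Finset α, M T → S ⊆ T → M S)
    (hM_aug : ∀ S T : Finset α, M S → M T → S.card < T.card → ∃ x ∈ T \ S, M (insert x S))
    [DecidablePred M]
    (K : ℕ) (hK_le : ∀ S, M S → S.card ≤ K) (hK_ex : ∃ B, M B ∧ B.card = K)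
    (A : Finset α) (hA_M : M A) (hA_card : A.card = K)
    (a : ℕ → α) (ha_inj : Set.InjOn a (Set.Icc 1 K))
    (ha_img : (Finset.Icc 1 K).image a = A)
    (i : ℕ) (hi : i ∈ Finset.Icc 1 K) :
    (∃! S : Finset α, S ⊆ N \ initSeg a (i - 1) ∧ S.card = K - i + 1 ∧
        M (initSeg a (i - 1) ∪ S)) ↔
      ((N \ initSeg a (i - 1)).filter
        fun x => M (insert x (initSeg a (i - 1)))).card = K - i + 1 := by
  obtain ⟨hi1, hiK⟩ := Finset.mem_Icc.mp hi
  set P := initSeg a (i - 1) with hP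
  set F := (N \ P).filter (fun x => M (insert x P)) with hF
  -- basic facts
  have hIccsub : Finset.Icc 1 (i - 1) ⊆ Finset.Icc 1 K := by
    apply Finset.Icc_subset_Icc le_rfl; omega
  have hPA : P ⊆ A := by
    rw [hP, initSeg, ← ha_img]
    exact Finset.image_subset_image hIccsub
  have hMP : M P := hM_down P A hA_M hPA
  have hPcard : P.card = i - 1 := by
    rw [hP, initSeg, Finset.card_image_of_injOn, Nat.card_Icc]
    · omega
    · intro x hx y hy hxy
      exact ha_inj (Set.mem_Icc.mpr (by simp at hx; omega))
        (Set.mem_Icc.mpr (by simp at hy; omega)) hxy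
  obtain ⟨B, hB, hBcard⟩ := hK_ex
  have hext := extend_aux M hM_aug K hK_le B hB hBcard (K + 1)
  -- any valid extension from a superset of P containing P gives a valid S
  have complete : ∀ S₀, M S₀ → P ⊆ S₀ →
      ∃ T, S₀ ⊆ T ∧ T \ P ⊆ N \ P ∧ (T \ P).card = K - i + 1 ∧ M (P ∪ (T \ P)) := by
    intro S₀ hS₀ hPS₀
    obtain ⟨T, hT1, hT2, hT3⟩ := hext S₀ hS₀ (by omega)
    have hPT : P ⊆ T := hPS₀.trans hT1
    refine ⟨T, hT1, Finset.sdiff_subset_sdiff (hM_ground T hT2) subset_rfl, ?_, ?_⟩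
    · rw [Finset.card_sdiff_of_subset hPT, hT3, hPcard]; omega
    · rw [Finset.union_sdiff_of_subset hPT]; exact hT2
  -- every valid S is contained in F
  have sub_F : ∀ S : Finset α, S ⊆ N \ P → M (P ∪ S) → S ⊆ F := by
    intro S hSN hSM x hxS
    rw [hF, Finset.mem_filter]
    refine ⟨hSN hxS, hM_down _ _ hSM ?_⟩
    exact Finset.insert_subset (Finset.mem_union_right _ hxS) Finset.subset_union_left
  constructor
  · rintro ⟨S, ⟨hS1, hS2, hS3⟩, huniq⟩
    have hSF : S ⊆ F := sub_F S hS1 hS3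
    have hFS : F ⊆ S := by
      intro x hxF
      rw [hF, Finset.mem_filter] at hxF
      obtain ⟨hxN, hxM⟩ := hxF
      have hPx : P ⊆ insert x P := Finset.subset_insert x P
      obtain ⟨T, hT1, hT2, hT3, hT4⟩ := complete (insert x P) hxM hPx
      have := huniq (T \ P) ⟨hT2, hT3, hT4⟩
      rw [← this]
      exact Finset.mem_sdiff.mpr ⟨hT1 (Finset.mem_insert_self x P), (Finset.mem_sdiff.mp hxN).2⟩
    have : F = S := Finset.Subset.antisymm hFS hSF
    rw [this, hS2]
  · intro hFcard
    obtain ⟨T, _, hT2, hT3, hT4⟩ := complete P hMP subset_rfl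
    have key : ∀ S : Finset α, S ⊆ N \ P ∧ S.card = K - i + 1 ∧ M (P ∪ S) → S = F := by
      rintro S ⟨h1, h2, h3⟩
      exact Finset.eq_of_subset_of_card_le (sub_F S h1 h3) (by rw [hFcard, h2])
    refine ⟨T \ P, ⟨hT2, hT3, hT4⟩, ?_⟩
    intro S hS
    rw [key S hS, key (T \ P) ⟨hT2, hT3, hT4⟩]
end
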